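/- arXiv:1109.2212 — 2 statements merged into one kernel-verified Lean document; each statement's English description precedes it below -/
import Mathlib

section
/- If a = {a_n} ∈ ℓ²(ℤ₊) has z-transform A(z) = Σ a_n zⁿ and b = {b_n} ∈ ℓ²(ℤ₊) has z-transform B(z) with B(z) = I(z)A(z) for all z ∈ 𝔻, where I is analytic on 𝔻 with |I(z)| ≤ 1, then Σ_{n=0}^N |b_n|² ≤ Σ_{n=0}^N |a_n|² for every N ≥ 0. -/
open Finset MeasureTheory AddCircle Metric Complex Filter
open scoped NNReal ENNReal

local instance : Fact ((0:ℝ) < 1) := ⟨one_pos⟩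

namespace PEI

noncomputable abbrev μ1 : Measure (AddCircle (1:ℝ)) := haarAddCircle

lemma norm_toCircle (x : AddCircle (1:ℝ)) : ‖(toCircle x : ℂ)‖ = 1 := by
  simpa using Circle.norm_coe (toCircle x)

lemma pow_toCircle (m : ℕ) (x : AddCircle (1:ℝ)) :
    (toCircle x : ℂ) ^ m = fourier (m : ℤ) x := by
  induction m with
  | zero => simp [fourier_zero]
  | succ k ih =>
      rw [pow_succ, ih]
      rw [show ((k+1 : ℕ) : ℤ) = (k : ℤ) + 1 by push_cast; ring, fourier_add, fourier_one]

lemma integral_fourier (k : ℤ) :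
    ∫ x : AddCircle (1:ℝ), fourier k x ∂μ1 = if k = 0 then 1 else 0 := by
  split_ifs with h
  · subst h
    simp only [fourier_zero]
    simp
  · exact integral_eq_zero_of_add_right_eq_neg
      (fourier_add_half_inv_index h one_pos)

end PEI

namespace PEI

lemma norm_term (g : ℕ → ℂ) {r : ℝ} (hr0 : 0 ≤ r) (m : ℕ) (x : AddCircle (1:ℝ)) :
    ‖g m * ((r:ℂ) * toCircle x) ^ m‖ = ‖g m‖ * r ^ m := by
  rw [norm_mul, mul_pow, norm_mul, norm_pow, norm_pow, norm_toCircle, one_pow, mul_one,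
    Complex.norm_real, Real.norm_of_nonneg hr0]

lemma continuous_pseries (g : ℕ → ℂ) {r : ℝ} (hr0 : 0 ≤ r)
    (hg : Summable fun m => ‖g m‖ * r ^ m) :
    Continuous fun x : AddCircle (1:ℝ) => ∑' m : ℕ, g m * ((r:ℂ) * toCircle x) ^ m := by
  apply continuous_tsum (u := fun m => ‖g m‖ * r ^ m) ?_ hg
  · intro n x
    exact le_of_eq (norm_term g hr0 n x)
  · intro m
    apply Continuous.mul continuous_const
    apply Continuous.pow
    exact Continuous.mul continuous_const
      (continuous_induced_dom.comp continuous_toCircle)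

lemma integrable_cont {E : Type*} [NormedAddCommGroup E] {f : AddCircle (1:ℝ) → E}
    (hf : Continuous f) : Integrable f μ1 :=
  hf.integrable_of_hasCompactSupport (HasCompactSupport.of_compactSpace f)

/-- swap integral and power series sum against a continuous factor -/
lemma integral_pseries_mul (g : ℕ → ℂ) {G : AddCircle (1:ℝ) → ℂ} (hG : Continuous G)
    {r : ℝ} (hr0 : 0 ≤ r) (hg : Summable fun m => ‖g m‖ * r ^ m) :
    ∫ x : AddCircle (1:ℝ), (∑' m : ℕ, g m * ((r:ℂ) * toCircle x) ^ m) * G x ∂μ1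
      = ∑' m : ℕ, g m * (r:ℂ) ^ m * ∫ x : AddCircle (1:ℝ), fourier (m:ℤ) x * G x ∂μ1 := by
  have hint : ∀ m : ℕ, Integrable (fun x : AddCircle (1:ℝ) =>
      g m * ((r:ℂ) * toCircle x) ^ m * G x) μ1 := by
    intro m
    apply integrable_cont
    exact (continuous_const.mul ((Continuous.pow (Continuous.mul continuous_const
      (continuous_induced_dom.comp continuous_toCircle)) m))).mul hG
  have hsum : Summable fun m : ℕ =>
      ∫ x : AddCircle (1:ℝ), ‖g m * ((r:ℂ) * toCircle x) ^ m * G x‖ ∂μ1 := by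
    apply Summable.of_nonneg_of_le (fun m => integral_nonneg fun x => norm_nonneg _)
      (fun m => ?_) (hg.mul_right (∫ x, ‖G x‖ ∂μ1))
    calc ∫ x, ‖g m * ((r:ℂ) * toCircle x) ^ m * G x‖ ∂μ1
        = ∫ x, (‖g m‖ * r ^ m) * ‖G x‖ ∂μ1 := by
          congr 1; funext x; rw [norm_mul, norm_term g hr0]
      _ = ‖g m‖ * r ^ m * ∫ x, ‖G x‖ ∂μ1 := by
          rw [integral_const_mul]
      _ ≤ ‖g m‖ * r ^ m * ∫ x, ‖G x‖ ∂μ1 := le_refl _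
  calc ∫ x : AddCircle (1:ℝ), (∑' m : ℕ, g m * ((r:ℂ) * toCircle x) ^ m) * G x ∂μ1
      = ∫ x : AddCircle (1:ℝ), ∑' m : ℕ, g m * ((r:ℂ) * toCircle x) ^ m * G x ∂μ1 := by
        congr 1; funext x
        exact (tsum_mul_right).symm
    _ = ∑' m : ℕ, ∫ x : AddCircle (1:ℝ), g m * ((r:ℂ) * toCircle x) ^ m * G x ∂μ1 :=
        (integral_tsum_of_summable_integral_norm hint hsum).symm
    _ = ∑' m : ℕ, g m * (r:ℂ) ^ m * ∫ x : AddCircle (1:ℝ), fourier (m:ℤ) x * G x ∂μ1 := by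
        apply tsum_congr; intro m
        rw [← integral_const_mul]
        congr 1; funext x
        rw [mul_pow, ← pow_toCircle]
        ring

end PEI

namespace PEI

lemma integral_pseries_fourier (g : ℕ → ℂ) {r : ℝ} (hr0 : 0 ≤ r)
    (hg : Summable fun m => ‖g m‖ * r ^ m) (l : ℤ) :
    ∫ x : AddCircle (1:ℝ), (∑' m : ℕ, g m * ((r:ℂ) * toCircle x) ^ m) * fourier l x ∂μ1
      = ∑' m : ℕ, g m * (r:ℂ) ^ m * (if (m:ℤ) + l = 0 then 1 else 0) := by
  rw [integral_pseries_mul g (fourier l).continuous hr0 hg]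
  apply tsum_congr; intro m
  congr 1
  rw [← integral_fourier ((m:ℤ) + l)]
  congr 1; funext x
  rw [fourier_add]

/-- Cauchy: analytic functions have vanishing negative Fourier coefficients. -/
lemma analytic_vanish {F : ℂ → ℂ} (hF : DifferentiableOn ℂ F (ball (0:ℂ) 1))
    {r : ℝ} (hr0 : 0 ≤ r) (hr1 : r < 1) {l : ℤ} (hl : 1 ≤ l) :
    ∫ x : AddCircle (1:ℝ), F ((r:ℂ) * toCircle x) * fourier l x ∂μ1 = 0 := by
  set ρ : ℝ≥0 := ⟨(r+1)/2, by linarith⟩ with hρ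
  have hrρ : r < (ρ : ℝ) := by show r < (r+1)/2; linarith
  have hρ1 : (ρ : ℝ) < 1 := by show (r+1)/2 < 1; linarith
  have hρ0 : 0 < ρ := by
    rw [← NNReal.coe_pos]; simp [hρ]; linarith
  have hball : DifferentiableOn ℂ F (closedBall (0:ℂ) (ρ : ℝ)) := by
    apply hF.mono
    intro z hz
    rw [mem_closedBall_zero_iff] at hz
    rw [mem_ball_zero_iff]
    exact lt_of_le_of_lt hz hρ1
  have hps := hball.hasFPowerSeriesOnBall hρ0
  set P := cauchyPowerSeries F 0 ((ρ:ℝ≥0) : ℝ) with hP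
  have hrad : (ρ : ℝ≥0∞) ≤ P.radius := hps.r_le
  have hgsum : Summable fun m => ‖P.coeff m‖ * r ^ m := by
    have hlt : (r.toNNReal : ℝ≥0∞) < P.radius := by
      refine lt_of_lt_of_le ?_ hrad
      exact_mod_cast (by rw [← NNReal.coe_lt_coe, Real.coe_toNNReal r hr0]; exact hrρ :
        r.toNNReal < ρ)
    have := P.summable_norm_mul_pow hlt
    simpa [FormalMultilinearSeries.norm_apply_eq_norm_coef,
      Real.coe_toNNReal r hr0] using this
  have heq : ∀ x : AddCircle (1:ℝ),
      F ((r:ℂ) * toCircle x) = ∑' m : ℕ, P.coeff m * ((r:ℂ) * toCircle x) ^ m := by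
    intro x
    have hnorm : ‖(r:ℂ) * toCircle x‖ = r := by
      rw [norm_mul, norm_toCircle, mul_one, Complex.norm_real, Real.norm_of_nonneg hr0]
    have hmem : ((r:ℂ) * toCircle x) ∈ Metric.eball (0:ℂ) (ρ : ℝ≥0∞) := by
      rw [mem_emetric_ball_zero_iff, enorm_eq_nnnorm, ENNReal.coe_lt_coe, ← NNReal.coe_lt_coe, coe_nnnorm,
        hnorm]
      exact hrρ
    have := hps.hasSum (y := (r:ℂ) * toCircle x) hmem
    rw [zero_add] at this
    rw [this.tsum_eq.symm]
    apply tsum_congr; intro m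
    rw [FormalMultilinearSeries.apply_eq_pow_smul_coeff, smul_eq_mul]
    ring
  calc ∫ x : AddCircle (1:ℝ), F ((r:ℂ) * toCircle x) * fourier l x ∂μ1
      = ∫ x : AddCircle (1:ℝ),
          (∑' m : ℕ, P.coeff m * ((r:ℂ) * toCircle x) ^ m) * fourier l x ∂μ1 := by
        congr 1; funext x; rw [heq x]
    _ = ∑' m : ℕ, P.coeff m * (r:ℂ) ^ m * (if (m:ℤ) + l = 0 then 1 else 0) :=
        integral_pseries_fourier _ hr0 hgsum l
    _ = ∑' (_ : ℕ), (0:ℂ) := by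
        apply tsum_congr; intro m
        have : ¬ ((m:ℤ) + l = 0) := by omega
        simp [this]
    _ = 0 := tsum_zero
end PEI

namespace PEI

lemma parseval_summable (G : C(AddCircle (1:ℝ), ℂ)) :
    Summable (fun i : ℤ => ‖fourierCoeff (⇑G) i‖ ^ 2) ∧
    ∑' i : ℤ, ‖fourierCoeff (⇑G) i‖ ^ 2 = ∫ x : AddCircle (1:ℝ), ‖G x‖ ^ 2 ∂μ1 := by
  set Glp := ContinuousMap.toLp (E := ℂ) 2 μ1 ℂ G with hGL
  have hcoeff : ∀ i : ℤ, fourierCoeff (Glp : AddCircle (1:ℝ) → ℂ) i = fourierCoeff (⇑G) i :=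
    fourierCoeff_toLp G
  constructor
  · have hmem := lp.memℓp ((fourierBasis (T := 1)).repr Glp)
    have hsum := hmem.summable (by norm_num : 0 < (2:ℝ≥0∞).toReal)
    have : ∀ i : ℤ, ‖(fourierBasis (T := 1)).repr Glp i‖ ^ (2:ℝ≥0∞).toReal
        = ‖fourierCoeff (⇑G) i‖ ^ 2 := by
      intro i
      rw [fourierBasis_repr, hcoeff i]
      norm_num
    rw [funext this] at hsum
    exact hsum
  · rw [← funext hcoeff]
    rw [tsum_sq_fourierCoeff Glp]
    apply integral_congr_ae
    filter_upwards [ContinuousMap.coeFn_toLp (p := 2) (𝕜 := ℂ) μ1 G] with x hx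
    rw [hx]

lemma l2_summable {c : ℕ → ℂ} (hc : Memℓp c 2) {r : ℝ} (hr0 : 0 ≤ r) (hr1 : r < 1) :
    Summable fun m => ‖c m‖ * r ^ m := by
  have h2 := hc.summable (by norm_num : 0 < (2:ℝ≥0∞).toReal)
  have h2' : Summable fun m => ‖c m‖ ^ 2 := by
    have : ∀ m, ‖c m‖ ^ (2:ℝ≥0∞).toReal = ‖c m‖ ^ 2 := fun m => by norm_num
    rwa [funext this] at h2
  have hgeo : Summable fun m : ℕ => (r ^ 2) ^ m :=
    summable_geometric_of_lt_one (by positivity) (by nlinarith)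
  apply Summable.of_nonneg_of_le (fun m => by positivity)
    (fun m => ?_) ((h2'.add hgeo).div_const 2)
  have h := two_mul_le_add_sq (‖c m‖) (r ^ m)
  have : (r ^ m) ^ 2 = (r ^ 2) ^ m := by ring
  nlinarith [pow_nonneg hr0 m, norm_nonneg (c m)]

end PEI

namespace PEI

lemma key (a b : ℕ → ℂ) (ha : Memℓp a 2) (hb : Memℓp b 2)
    (I : ℂ → ℂ) (hI : DifferentiableOn ℂ I (ball (0:ℂ) 1))
    (hI1 : ∀ z ∈ ball (0:ℂ) 1, ‖I z‖ ≤ 1)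
    (hBA : ∀ z ∈ ball (0:ℂ) 1,
      (∑' n : ℕ, b n * z ^ n) = I z * ∑' n : ℕ, a n * z ^ n)
    (N : ℕ) {r : ℝ} (hr0 : 0 ≤ r) (hr1 : r < 1) :
    ∑ n ∈ range (N + 1), ‖b n‖ ^ 2 * r ^ (2 * n)
      ≤ ∑ n ∈ range (N + 1), ‖a n‖ ^ 2 := by
  set zc : AddCircle (1:ℝ) → ℂ := fun x => (r:ℂ) * toCircle x with hzc
  have hzcont : Continuous zc :=
    continuous_const.mul (continuous_induced_dom.comp continuous_toCircle)
  have hznorm : ∀ x, ‖zc x‖ = r := by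
    intro x
    rw [hzc]
    rw [norm_mul, norm_toCircle, mul_one, Complex.norm_real, Real.norm_of_nonneg hr0]
  have hzmem : ∀ x, zc x ∈ ball (0:ℂ) 1 := by
    intro x; rw [mem_ball_zero_iff, hznorm]; exact hr1
  set q : ℕ → ℂ := fun m => if m ≤ N then a m else 0 with hq
  set t : ℕ → ℂ := fun m => if m ≤ N then 0 else a m with ht
  have hsa := l2_summable ha hr0 hr1
  have hsb := l2_summable hb hr0 hr1
  have hsq : Summable fun m => ‖q m‖ * r ^ m := by
    apply Summable.of_nonneg_of_le (fun m => by positivity) (fun m => ?_) hsa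
    apply mul_le_mul_of_nonneg_right ?_ (by positivity)
    rw [hq]; dsimp only; split_ifs <;> simp
  have hst : Summable fun m => ‖t m‖ * r ^ m := by
    apply Summable.of_nonneg_of_le (fun m => by positivity) (fun m => ?_) hsa
    apply mul_le_mul_of_nonneg_right ?_ (by positivity)
    rw [ht]; dsimp only; split_ifs <;> simp
  -- summability of the complex series at a point on the circle of radius r
  have hsummz : ∀ (g : ℕ → ℂ), (Summable fun m => ‖g m‖ * r ^ m) → ∀ x,
      Summable fun m => g m * (zc x) ^ m := by
    intro g hg x
    apply Summable.of_norm
    have : ∀ m, ‖g m * (zc x) ^ m‖ = ‖g m‖ * r ^ m := fun m => norm_term g hr0 m x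
    rwa [funext this]
  set Pc : C(AddCircle (1:ℝ), ℂ) :=
    ⟨fun x => ∑' m : ℕ, q m * (zc x) ^ m, continuous_pseries q hr0 hsq⟩ with hPc
  set fc : C(AddCircle (1:ℝ), ℂ) :=
    ⟨fun x => I (zc x) * Pc x,
      (hI.continuousOn.comp_continuous hzcont hzmem).mul Pc.continuous⟩ with hfc
  -- pointwise decomposition
  have hkey : ∀ x, fc x = (∑' m : ℕ, b m * (zc x) ^ m)
      - I (zc x) * (∑' m : ℕ, t m * (zc x) ^ m) := by
    intro x
    have hsplit : (∑' m : ℕ, a m * (zc x) ^ m)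
        = Pc x + ∑' m : ℕ, t m * (zc x) ^ m := by
      rw [hPc]
      dsimp only [ContinuousMap.coe_mk]
      rw [← Summable.tsum_add (hsummz q hsq x) (hsummz t hst x)]
      apply tsum_congr; intro m
      rw [hq, ht]; dsimp only; split_ifs <;> ring
    have hb' := hBA (zc x) (hzmem x)
    rw [hfc]
    dsimp only [ContinuousMap.coe_mk]
    rw [hb', hsplit]
    ring
  -- Fourier coefficients of fc
  have hfcoeff : ∀ n : ℕ, n ≤ N → fourierCoeff (⇑fc) (n:ℤ) = b n * (r:ℂ) ^ n := by
    intro n hn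
    have hBcont : Continuous fun x : AddCircle (1:ℝ) => ∑' m : ℕ, b m * (zc x) ^ m :=
      continuous_pseries b hr0 hsb
    have hTcont : Continuous fun x : AddCircle (1:ℝ) => ∑' m : ℕ, t m * (zc x) ^ m :=
      continuous_pseries t hr0 hst
    have hIcont : Continuous fun x : AddCircle (1:ℝ) => I (zc x) :=
      hI.continuousOn.comp_continuous hzcont hzmem
    rw [fourierCoeff]
    calc ∫ x : AddCircle (1:ℝ), fourier (-(n:ℤ)) x • fc x ∂μ1
        = ∫ x : AddCircle (1:ℝ),
            ((∑' m : ℕ, b m * (zc x) ^ m) * fourier (-(n:ℤ)) x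
            - (∑' m : ℕ, t m * (zc x) ^ m)
              * (I (zc x) * fourier (-(n:ℤ)) x)) ∂μ1 := by
          congr 1; funext x
          rw [smul_eq_mul, hkey x]; ring
      _ = (∫ x : AddCircle (1:ℝ),
            (∑' m : ℕ, b m * (zc x) ^ m) * fourier (-(n:ℤ)) x ∂μ1)
          - ∫ x : AddCircle (1:ℝ), (∑' m : ℕ, t m * (zc x) ^ m)
              * (I (zc x) * fourier (-(n:ℤ)) x) ∂μ1 := by
          apply integral_sub
          · exact integrable_cont (hBcont.mul (fourier _).continuous)
          · exact integrable_cont (hTcont.mul (hIcont.mul (fourier _).continuous))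
      _ = b n * (r:ℂ) ^ n - 0 := by
          congr 1
          · rw [integral_pseries_fourier b hr0 hsb (-(n:ℤ))]
            rw [tsum_eq_single n ?_]
            · simp
            · intro m hm
              have : ¬ ((m:ℤ) + -(n:ℤ) = 0) := by omega
              simp [this]
          · refine (integral_pseries_mul t (G := fun x => I (zc x) * fourier (-(n:ℤ)) x)
              (hIcont.mul (fourier _).continuous) hr0 hst).trans ?_
            calc ∑' m : ℕ, t m * (r:ℂ) ^ m * ∫ x : AddCircle (1:ℝ),
                  fourier (m:ℤ) x * (I (zc x) * fourier (-(n:ℤ)) x) ∂μ1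
                = ∑' (_ : ℕ), (0:ℂ) := by
                  apply tsum_congr; intro m
                  by_cases hmN : m ≤ N
                  · rw [ht]; dsimp only; rw [if_pos hmN]; ring
                  · have hvan : ∫ x : AddCircle (1:ℝ),
                        I (zc x) * fourier ((m:ℤ) - (n:ℤ)) x ∂μ1 = 0 :=
                      analytic_vanish hI hr0 hr1 (by omega)
                    have : (∫ x : AddCircle (1:ℝ),
                        fourier (m:ℤ) x * (I (zc x) * fourier (-(n:ℤ)) x) ∂μ1) = 0 := by
                      rw [← hvan]
                      congr 1; funext x
                      rw [show (m:ℤ) - (n:ℤ) = (m:ℤ) + -(n:ℤ) by ring, fourier_add]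
                      ring
                    rw [this, mul_zero]
              _ = 0 := tsum_zero
      _ = b n * (r:ℂ) ^ n := by ring
  -- Fourier coefficients of Pc
  have hPcoeff : ∀ i : ℤ, fourierCoeff (⇑Pc) i
      = if 0 ≤ i ∧ i ≤ (N:ℤ) then a i.toNat * (r:ℂ) ^ i.toNat else 0 := by
    intro i
    rw [fourierCoeff]
    have : ∀ x : AddCircle (1:ℝ), fourier (-i) x • Pc x
        = (∑' m : ℕ, q m * (zc x) ^ m) * fourier (-i) x := by
      intro x; rw [smul_eq_mul, hPc]; dsimp only [ContinuousMap.coe_mk]; ring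
    rw [funext this, integral_pseries_fourier q hr0 hsq (-i)]
    by_cases hi : 0 ≤ i ∧ i ≤ (N:ℤ)
    · rw [if_pos hi]
      rw [tsum_eq_single i.toNat ?_]
      · have h1 : ((i.toNat : ℤ)) + -i = 0 := by omega
        have h2 : i.toNat ≤ N := by omega
        rw [if_pos h1, hq]; dsimp only; rw [if_pos h2]; ring
      · intro m hm
        have : ¬ ((m:ℤ) + -i = 0) := by omega
        simp [this]
    · rw [if_neg hi]
      calc ∑' m : ℕ, q m * (r:ℂ) ^ m * (if (m:ℤ) + -i = 0 then 1 else 0)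
          = ∑' (_ : ℕ), (0:ℂ) := by
            apply tsum_congr; intro m
            by_cases hmi : (m:ℤ) + -i = 0
            · have : ¬ m ≤ N := by omega
              rw [hq]; dsimp only; rw [if_neg this]; ring
            · simp [hmi]
        _ = 0 := tsum_zero
  -- Parseval
  obtain ⟨hsumf, heqf⟩ := parseval_summable fc
  obtain ⟨hsumP, heqP⟩ := parseval_summable Pc
  set S : Finset ℤ := (range (N+1)).map ⟨fun n : ℕ => (n:ℤ), Nat.cast_injective⟩ with hS
  have hmemS : ∀ i : ℤ, i ∈ S ↔ 0 ≤ i ∧ i ≤ (N:ℤ) := by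
    intro i
    rw [hS, Finset.mem_map]
    simp only [Function.Embedding.coeFn_mk, Finset.mem_range]
    constructor
    · rintro ⟨n, hn, rfl⟩; omega
    · rintro ⟨h1, h2⟩; exact ⟨i.toNat, by omega, by omega⟩
  have hnormsq : ∀ (c : ℂ) (n : ℕ), ‖c * (r:ℂ) ^ n‖ ^ 2 = ‖c‖ ^ 2 * r ^ (2*n) := by
    intro c n
    rw [norm_mul, mul_pow, norm_pow, Complex.norm_real, Real.norm_of_nonneg hr0,
      ← pow_mul]
    ring_nf
  calc ∑ n ∈ range (N + 1), ‖b n‖ ^ 2 * r ^ (2*n)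
      = ∑ i ∈ S, ‖fourierCoeff (⇑fc) i‖ ^ 2 := by
        rw [hS, Finset.sum_map]
        apply Finset.sum_congr rfl
        intro n hn
        simp only [Finset.mem_range] at hn
        rw [Function.Embedding.coeFn_mk, hfcoeff n (by omega), hnormsq]
    _ ≤ ∑' i : ℤ, ‖fourierCoeff (⇑fc) i‖ ^ 2 :=
        hsumf.sum_le_tsum S (fun i _ => by positivity)
    _ = ∫ x : AddCircle (1:ℝ), ‖fc x‖ ^ 2 ∂μ1 := heqf
    _ ≤ ∫ x : AddCircle (1:ℝ), ‖Pc x‖ ^ 2 ∂μ1 := by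
        apply integral_mono
        · exact integrable_cont (fc.continuous.norm.pow 2)
        · exact integrable_cont (Pc.continuous.norm.pow 2)
        · intro x
          have h1 : ‖fc x‖ = ‖I (zc x)‖ * ‖Pc x‖ := by
            rw [hfc]; dsimp only [ContinuousMap.coe_mk]; exact norm_mul _ _
          have h2 : ‖I (zc x)‖ ≤ 1 := by
            exact hI1 _ (hzmem x)
          have h3 : ‖Pc x‖ ^ 2 = ‖Pc x‖ ^2 := rfl
          calc ‖fc x‖ ^ 2 = (‖I (zc x)‖ * ‖Pc x‖) ^ 2 := by rw [h1]
            _ ≤ (1 * ‖Pc x‖) ^ 2 := by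
                apply pow_le_pow_left₀ (by positivity)
                exact mul_le_mul_of_nonneg_right h2 (norm_nonneg _)
            _ = ‖Pc x‖ ^ 2 := by ring
    _ = ∑' i : ℤ, ‖fourierCoeff (⇑Pc) i‖ ^ 2 := heqP.symm
    _ = ∑ i ∈ S, ‖fourierCoeff (⇑Pc) i‖ ^ 2 := by
        apply tsum_eq_sum
        intro i hi
        rw [hPcoeff i, if_neg (by rw [← hmemS]; exact hi)]
        simp
    _ = ∑ n ∈ range (N + 1), ‖a n‖ ^ 2 * r ^ (2*n) := by
        rw [hS, Finset.sum_map]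
        apply Finset.sum_congr rfl
        intro n hn
        simp only [Finset.mem_range] at hn
        rw [Function.Embedding.coeFn_mk, hPcoeff]
        rw [if_pos (by constructor <;> omega)]
        simp only [Int.toNat_natCast]
        rw [hnormsq]
    _ ≤ ∑ n ∈ range (N + 1), ‖a n‖ ^ 2 := by
        apply Finset.sum_le_sum
        intro n hn
        calc ‖a n‖ ^ 2 * r ^ (2*n) ≤ ‖a n‖ ^ 2 * 1 := by
              apply mul_le_mul_of_nonneg_left ?_ (by positivity)
              exact pow_le_one₀ hr0 hr1.le
          _ = ‖a n‖ ^ 2 := by ring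

end PEI

open PEI in
theorem partial_energy_inequality (a b : ℕ → ℂ)
    (ha : Memℓp a 2) (hb : Memℓp b 2)
    (I : ℂ → ℂ) (hI : DifferentiableOn ℂ I (Metric.ball (0 : ℂ) 1))
    (hI1 : ∀ z ∈ Metric.ball (0 : ℂ) 1, ‖I z‖ ≤ 1)
    (hBA : ∀ z ∈ Metric.ball (0 : ℂ) 1,
      (∑' n : ℕ, b n * z ^ n) = I z * ∑' n : ℕ, a n * z ^ n) :
    ∀ N : ℕ, ∑ n ∈ range (N + 1), ‖b n‖ ^ 2 ≤
      ∑ n ∈ range (N + 1), ‖a n‖ ^ 2 := by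
  intro N
  have hgoal : ∑ n ∈ range (N + 1), ‖b n‖ ^ 2 ≤ ∑ n ∈ range (N + 1), ‖a n‖ ^ 2 := by
    have hkey : ∀ r : ℝ, 0 ≤ r → r < 1 →
        ∑ n ∈ range (N + 1), ‖b n‖ ^ 2 * r ^ (2 * n)
          ≤ ∑ n ∈ range (N + 1), ‖a n‖ ^ 2 :=
      fun r hr0 hr1 => key a b ha hb I hI hI1 hBA N hr0 hr1
    have htend : Filter.Tendsto
        (fun r : ℝ => ∑ n ∈ range (N + 1), ‖b n‖ ^ 2 * r ^ (2 * n))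
        (nhdsWithin 1 (Set.Iio 1)) (nhds (∑ n ∈ range (N + 1), ‖b n‖ ^ 2)) := by
      have hc : Continuous fun r : ℝ =>
          ∑ n ∈ range (N + 1), ‖b n‖ ^ 2 * r ^ (2 * n) := by
        apply continuous_finset_sum
        intro n _
        exact continuous_const.mul (continuous_pow _)
      have := hc.continuousAt (x := (1:ℝ)) |>.continuousWithinAt (s := Set.Iio 1)
      have h1 : ∑ n ∈ range (N + 1), ‖b n‖ ^ 2 * (1:ℝ) ^ (2 * n)
          = ∑ n ∈ range (N + 1), ‖b n‖ ^ 2 := by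
        apply Finset.sum_congr rfl; intros; rw [one_pow, mul_one]
      simpa [ContinuousWithinAt, h1] using this
    apply le_of_tendsto htend
    filter_upwards [Ioo_mem_nhdsLT_of_mem (by constructor <;> norm_num :
        (1:ℝ) ∈ Set.Ioc 0 1)] with r hr
    exact hkey r hr.1.le hr.2
  exact hgoal
end

section
/- For each n ≥ 0, the Laplace transform of the function t ↦ (−1)ⁿ √2 e^{−t} L_n(2t), where L_n is the nth Laguerre polynomial, evaluated at w in the right half plane and multiplied by 2√π/(1+z) under the substitution w = (1−z)/(1+z), equals zⁿ; equivalently ℋ((−1)ⁿ √2 e^{−t} L_n(2t))(z) = zⁿ for all z ∈ 𝔻. -/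
open MeasureTheory Set

noncomputable def laguerre (n : ℕ) (t : ℝ) : ℝ :=
  Real.exp t / n.factorial * iteratedDeriv n (fun s => s ^ n * Real.exp (-s)) t

noncomputable def Hmap (f : ℝ → ℂ) (z : ℂ) : ℂ :=
  (Real.sqrt 2 / (1 + z)) * ∫ t in Ioi (0 : ℝ), f t * Complex.exp (t * (z - 1) / (z + 1))

namespace HmapLaguerreAux

open Polynomial Finset Filter Topology

lemma deriv_step (p : ℝ[X]) :
    deriv (fun s => p.eval s * Real.exp (-s)) =
      fun t => (derivative p - p).eval t * Real.exp (-t) := by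
  funext t
  have h1 : HasDerivAt (fun s : ℝ => Real.exp (-s)) (-Real.exp (-t)) t := by
    simpa [Function.comp_def] using ((Real.hasDerivAt_exp (-t)).comp t (hasDerivAt_neg t))
  have := (p.hasDerivAt t).mul h1
  rw [show (fun s => p.eval s * Real.exp (-s)) = ((fun x => eval x p) * fun s => Real.exp (-s)) from rfl,
    this.deriv]
  simp [Polynomial.eval_sub]
  ring

lemma iter_step (m : ℕ) (p : ℝ[X]) :
    iteratedDeriv m (fun s => p.eval s * Real.exp (-s)) =
      fun t => (((derivative - 1 : Module.End ℝ ℝ[X]) ^ m) p).eval t * Real.exp (-t) := by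
  induction m with
  | zero => simp
  | succ m ih =>
    rw [iteratedDeriv_succ, ih, deriv_step, pow_succ']
    funext t
    simp [Module.End.mul_apply]

lemma end_expand (n : ℕ) (t : ℝ) :
    (((derivative - 1 : Module.End ℝ ℝ[X]) ^ n) (X ^ n)).eval t
      = ∑ m ∈ range (n+1),
          (n.choose m : ℝ) * (n.descFactorial m) * (-1)^(n-m) * t^(n-m) := by
  have h := (Commute.neg_one_right (derivative : Module.End ℝ ℝ[X])).add_pow n
  rw [sub_eq_add_neg, h, LinearMap.sum_apply, Polynomial.eval_finset_sum]
  refine Finset.sum_congr rfl fun m hm => ?_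
  rw [Module.End.mul_apply, Module.End.mul_apply]
  have h1 : ((n.choose m : Module.End ℝ ℝ[X]) (X ^ n)) = (n.choose m : ℝ[X]) * X ^ n := by
    simp [Module.End.natCast_apply, nsmul_eq_mul]
  have h2 : ((-1 : Module.End ℝ ℝ[X]) ^ (n - m)) = ((-1 : ℝ) ^ (n-m)) • (1 : Module.End ℝ ℝ[X]) := by
    rw [← neg_one_smul ℝ (1 : Module.End ℝ ℝ[X]), _root_.smul_pow, one_pow]
  rw [h1, h2]
  simp [Module.End.pow_apply, Polynomial.iterate_derivative_X_pow_eq_natCast_mul,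
    Polynomial.iterate_derivative_natCast_mul]
  ring

lemma laguerre_eq (n : ℕ) (t : ℝ) :
    laguerre n t = ∑ k ∈ range (n+1),
      (n.choose k : ℝ) * (n.descFactorial (n-k)) * (-1)^k * t^k / n.factorial := by
  have hfun : (fun s : ℝ => s ^ n * Real.exp (-s))
      = fun s => (X ^ n : ℝ[X]).eval s * Real.exp (-s) := by
    funext s; simp
  rw [laguerre, hfun, iter_step]
  simp only []
  rw [end_expand, ← Finset.sum_range_reflect]
  have hS : (∑ j ∈ range (n+1), (n.choose (n+1-1-j) : ℝ) * (n.descFactorial (n+1-1-j))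
        * (-1)^(n-(n+1-1-j)) * t^(n-(n+1-1-j)))
      = ∑ k ∈ range (n+1), (n.choose k : ℝ) * (n.descFactorial (n-k)) * (-1)^k * t^k := by
    refine Finset.sum_congr rfl fun k hk => ?_
    have hk' : k ≤ n := Nat.lt_succ_iff.mp (Finset.mem_range.mp hk)
    have h1 : n + 1 - 1 - k = n - k := by omega
    have h2 : n - (n - k) = k := by omega
    rw [h1, h2, Nat.choose_symm hk']
  rw [hS, Finset.sum_mul, Finset.mul_sum]
  refine Finset.sum_congr rfl fun k _ => ?_
  have hexp : Real.exp t * Real.exp (-t) = 1 := by rw [← Real.exp_add]; simp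
  have : Real.exp t / (n.factorial : ℝ) *
      ((n.choose k : ℝ) * (n.descFactorial (n-k)) * (-1)^k * t^k * Real.exp (-t))
      = (Real.exp t * Real.exp (-t)) *
        ((n.choose k : ℝ) * (n.descFactorial (n-k)) * (-1)^k * t^k / n.factorial) := by
    ring
  rw [this, hexp, one_mul]

lemma cont_pe (a : ℂ) (k : ℕ) :
    Continuous (fun t : ℝ => (t:ℂ)^k * Complex.exp (-(a*t))) := by
  exact (Complex.continuous_ofReal.pow k).mul
    (Complex.continuous_exp.comp ((continuous_const.mul Complex.continuous_ofReal).neg))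

lemma integrable_pow_exp (a : ℂ) (ha : 0 < a.re) (k : ℕ) :
    IntegrableOn (fun t : ℝ => (t:ℂ)^k * Complex.exp (-(a * t))) (Ioi 0) := by
  have hg : IntegrableOn (fun t : ℝ => t ^ (k:ℝ) * Real.exp (-a.re * t ^ (1:ℝ))) (Ioi 0) :=
    integrableOn_rpow_mul_exp_neg_mul_rpow (neg_one_lt_zero.trans_le (Nat.cast_nonneg k)) one_pos ha
  refine Integrable.mono' hg ((cont_pe a k).aestronglyMeasurable) ?_
  filter_upwards [ae_restrict_mem measurableSet_Ioi] with t ht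
  rw [Set.mem_Ioi] at ht
  have : (-(a * (t:ℂ))).re = -a.re * t := by simp
  rw [norm_mul, norm_pow]
  simp only [Complex.norm_exp, Complex.norm_real, Real.norm_eq_abs, this,
    abs_of_pos ht, Real.rpow_natCast, Real.rpow_one]
  exact le_rfl

lemma tendsto_pe (a : ℂ) (ha : 0 < a.re) (k : ℕ) :
    Tendsto (fun t : ℝ => (t:ℂ)^k * Complex.exp (-(a*t))) atTop (𝓝 0) := by
  rw [tendsto_zero_iff_norm_tendsto_zero]
  have hnorm : ∀ᶠ t : ℝ in atTop, ‖(t:ℂ)^k * Complex.exp (-(a*t))‖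
      = t ^ k * Real.exp (-a.re * t) := by
    filter_upwards [eventually_gt_atTop 0] with t ht
    have : (-(a * (t:ℂ))).re = -a.re * t := by simp
    rw [norm_mul, norm_pow]
    simp only [Complex.norm_exp, Complex.norm_real, Real.norm_eq_abs, this, abs_of_pos ht]
  rw [tendsto_congr' hnorm]
  have h1 : Tendsto (fun t : ℝ => a.re * t) atTop atTop :=
    Tendsto.const_mul_atTop ha tendsto_id
  have h2 := (Real.tendsto_pow_mul_exp_neg_atTop_nhds_zero k).comp h1
  have h3 := h2.const_mul ((a.re)⁻¹ ^ k)
  rw [mul_zero] at h3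
  refine h3.congr fun t => ?_
  simp only [Function.comp]
  rw [neg_mul, ← mul_assoc]
  congr 1
  rw [← mul_pow, ← mul_assoc, inv_mul_cancel₀ ha.ne', one_mul]

lemma integral_pow_exp (a : ℂ) (ha : 0 < a.re) : ∀ k : ℕ,
    (∫ t in Ioi (0:ℝ), (t:ℂ)^k * Complex.exp (-(a*t))) = k.factorial / a^(k+1) := by
  have ha0 : a ≠ 0 := fun h => by simp [h] at ha
  intro k
  induction k with
  | zero =>
    have hF : ∀ x : ℝ, HasDerivAt (fun t : ℝ => -Complex.exp (-(a*t))/a)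
        (Complex.exp (-(a*x))) x := by
      intro x
      have h1 : HasDerivAt (fun w : ℂ => -(a*w)) (-a) (x:ℂ) := by
        have := ((hasDerivAt_id (x:ℂ)).const_mul a).neg
        simp only [mul_one] at this
        exact this
      have h2 := ((Complex.hasDerivAt_exp (-(a*(x:ℂ)))).comp (x:ℂ) h1).neg.div_const a
      have h3 : Complex.exp (-(a*(x:ℂ))) = -(Complex.exp (-(a*(x:ℂ))) * -a) / a := by
        field_simp
      rw [h3]
      exact h2.comp_ofReal
    have htd : Filter.Tendsto (fun t : ℝ => -Complex.exp (-(a*t))/a) atTop (𝓝 0) := by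
      have := ((tendsto_pe a ha 0).neg).div_const a
      simpa using this
    have hcont : ContinuousWithinAt (fun t : ℝ => -Complex.exp (-(a*t))/a) (Ici 0) 0 :=
      (((Complex.continuous_exp.comp
        ((continuous_const.mul Complex.continuous_ofReal).neg)).neg.div_const
          a).continuousAt.continuousWithinAt)
    have h := integral_Ioi_of_hasDerivAt_of_tendsto hcont
      (fun x _ => hF x) ((integrable_pow_exp a ha 0).congr_fun (by intro x _; simp)
        measurableSet_Ioi) htd
    simp only [pow_zero, one_mul] at h ⊢
    rw [h]
    simp [Nat.factorial]
    ring
  | succ k ih =>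
    have hG : ∀ x : ℝ, HasDerivAt (fun t : ℝ => ((t:ℂ))^(k+1) * Complex.exp (-(a*t)))
        ((k+1 : ℂ) * (x:ℂ)^k * Complex.exp (-(a*x)) - a * ((x:ℂ)^(k+1) * Complex.exp (-(a*x)))) x := by
      intro x
      have h1 : HasDerivAt (fun w : ℂ => -(a*w)) (-a) (x:ℂ) := by
        have := ((hasDerivAt_id (x:ℂ)).const_mul a).neg
        simp only [mul_one] at this
        exact this
      have h2 := (Complex.hasDerivAt_exp (-(a*(x:ℂ)))).comp (x:ℂ) h1
      have h3 := (hasDerivAt_pow (k+1) (x:ℂ)).mul h2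
      have h4 : ((k+1 : ℕ) : ℂ) * (x:ℂ)^(k+1-1) * Complex.exp (-(a*(x:ℂ)))
            + (x:ℂ)^(k+1) * (Complex.exp (-(a*(x:ℂ))) * -a)
          = (k+1 : ℂ) * (x:ℂ)^k * Complex.exp (-(a*x)) - a * ((x:ℂ)^(k+1) * Complex.exp (-(a*x))) := by
        push_cast
        ring
      rw [← h4]
      exact h3.comp_ofReal
    have htd : Filter.Tendsto (fun t : ℝ => ((t:ℂ))^(k+1) * Complex.exp (-(a*t))) atTop (𝓝 0) :=
      tendsto_pe a ha (k+1)
    have hint : IntegrableOn (fun x : ℝ => (k+1 : ℂ) * (x:ℂ)^k * Complex.exp (-(a*x))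
        - a * ((x:ℂ)^(k+1) * Complex.exp (-(a*x)))) (Ioi 0) := by
      refine Integrable.sub ?_ ?_
      · simpa [mul_assoc] using ((integrable_pow_exp a ha k).const_mul (k+1 : ℂ))
      · exact (integrable_pow_exp a ha (k+1)).const_mul a
    have hcont : ContinuousWithinAt (fun t : ℝ => ((t:ℂ))^(k+1) * Complex.exp (-(a*t))) (Ici 0) 0 :=
      (cont_pe a (k+1)).continuousAt.continuousWithinAt
    have h := integral_Ioi_of_hasDerivAt_of_tendsto hcont (fun x _ => hG x) hint htd
    simp only [Complex.ofReal_zero, ne_eq] at h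
    rw [integral_sub (by simpa [mul_assoc] using ((integrable_pow_exp a ha k).const_mul (k+1 : ℂ)))
      ((integrable_pow_exp a ha (k+1)).const_mul a)] at h
    simp only [mul_assoc] at h
    rw [integral_const_mul, integral_const_mul, ih] at h
    have h0 : ((0:ℂ))^(k+1) * Complex.exp (-(a*0)) = 0 := by simp
    rw [h0, sub_zero] at h
    have h2 := sub_eq_zero.mp h
    rw [eq_div_iff (pow_ne_zero _ ha0)]
    have hpow : a^(k+1) ≠ 0 := pow_ne_zero _ ha0
    field_simp at h2
    push_cast [Nat.factorial_succ]
    linear_combination -h2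

end HmapLaguerreAux

open HmapLaguerreAux Finset in
theorem Hmap_laguerre (n : ℕ) :
    ∀ z ∈ Metric.ball (0 : ℂ) 1,
      Hmap (fun t => (((-1 : ℝ) ^ n * Real.sqrt 2 * Real.exp (-t) * laguerre n (2 * t) : ℝ) : ℂ))
        z = z ^ n := by
  intro z hz
  have hzlt : ‖z‖ < 1 := by
    simpa using mem_ball_zero_iff.mp hz
  have hre : -1 < z.re := by
    have h := (Complex.abs_re_le_norm z).trans_lt hzlt
    exact (abs_lt.mp h).1
  have hz1 : z + 1 ≠ 0 := by
    intro h
    have : z = -1 := by linear_combination h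
    rw [this] at hzlt
    simp at hzlt
  have hz1' : (1 : ℂ) + z ≠ 0 := by rwa [add_comm] at hz1
  set a : ℂ := 2 / (z + 1) with ha_def
  have ha0 : a ≠ 0 := div_ne_zero two_ne_zero hz1
  have ha : 0 < a.re := by
    rw [ha_def, Complex.div_re]
    have hns : 0 < Complex.normSq (z + 1) := by
      rwa [Complex.normSq_pos]
    have h1 : (2:ℂ).re = 2 := by simp
    have h2 : (2:ℂ).im = 0 := by simp
    rw [h1, h2]
    simp only [Complex.add_re, Complex.one_re, Complex.add_im, Complex.one_im, zero_mul, zero_div,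
      add_zero]
    have h3 : 0 < z.re + 1 := by linarith
    positivity
  -- coefficients
  set C : ℕ → ℂ := fun k => (-1:ℂ)^n * (Real.sqrt 2 : ℂ) * (n.choose k) *
      (n.descFactorial (n-k)) * (-1)^k * 2^k / (n.factorial) with hC
  -- pointwise identity
  have hpt : (fun t : ℝ =>
        (((-1 : ℝ) ^ n * Real.sqrt 2 * Real.exp (-t) * laguerre n (2 * t) : ℝ) : ℂ) *
          Complex.exp (t * (z - 1) / (z + 1)))
      = fun t : ℝ => ∑ k ∈ range (n+1), C k * ((t:ℂ)^k * Complex.exp (-(a*t))) := by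
    funext t
    have hE : ((Real.exp (-t) : ℝ) : ℂ) * Complex.exp ((t:ℂ) * (z - 1) / (z + 1))
        = Complex.exp (-(a*t)) := by
      rw [Complex.ofReal_exp, ← Complex.exp_add]
      push_cast
      congr 1
      rw [ha_def]
      field_simp
      ring
    rw [laguerre_eq]
    push_cast
    push_cast at hE
    rw [Finset.mul_sum, Finset.sum_mul]
    refine Finset.sum_congr rfl fun k _ => ?_
    rw [hC]
    simp only []
    linear_combination ((-1:ℂ)^n * (Real.sqrt 2 : ℂ) * (↑(n.choose k) * ↑(n.descFactorial (n-k))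
      * (-1:ℂ)^k * (2*(t:ℂ))^k / ↑n.factorial)) * hE
  rw [Hmap, hpt]
  rw [integral_finset_sum _ (fun k _ => ((integrable_pow_exp a ha k).const_mul (C k)))]
  have hterm : ∀ k ∈ range (n+1),
      (∫ t in Ioi (0:ℝ), C k * ((t:ℂ)^k * Complex.exp (-(a*t))))
        = ((-1:ℂ)^n * (Real.sqrt 2 : ℂ) * (z+1)/2) * ((-(z+1))^k * 1^(n-k) * (n.choose k)) := by
    intro k hk
    have hk' : k ≤ n := Nat.lt_succ_iff.mp (Finset.mem_range.mp hk)
    rw [integral_const_mul, integral_pow_exp a ha k, hC]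
    simp only []
    have hfact : ((n.descFactorial (n-k) : ℂ)) * (k.factorial) = (n.factorial : ℂ) := by
      have := Nat.factorial_mul_descFactorial (Nat.sub_le n k)
      rw [Nat.sub_sub_self hk'] at this
      exact_mod_cast by rw [mul_comm]; exact_mod_cast congrArg (Nat.cast : ℕ → ℂ) this
    have hnf : (n.factorial : ℂ) ≠ 0 := Nat.cast_ne_zero.mpr n.factorial_ne_zero
    have hkf : (k.factorial : ℂ) ≠ 0 := Nat.cast_ne_zero.mpr k.factorial_ne_zero
    have hneg : (-(z+1))^k = (-1:ℂ)^k * (z+1)^k := by rw [neg_pow]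
    rw [ha_def, div_pow, hneg, one_pow]
    have hdf : ((n.descFactorial (n-k) : ℂ)) ≠ 0 := by
      intro h; rw [h, zero_mul] at hfact; exact hnf hfact.symm
    rw [← hfact]
    field_simp
    ring
  rw [Finset.sum_congr rfl hterm, ← Finset.mul_sum, ← add_pow]
  have hsq : ((Real.sqrt 2 : ℝ) : ℂ) * ((Real.sqrt 2 : ℝ) : ℂ) = 2 := by
    rw [← Complex.ofReal_mul, Real.mul_self_sqrt (by norm_num)]
    norm_num
  have hzz : (-(z+1) + 1) = -z := by ring
  rw [hzz, neg_pow]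
  have hneg1 : (-1:ℂ)^n * (-1:ℂ)^n = 1 := by rw [← mul_pow]; norm_num
  field_simp
  ring_nf
  have h1 : ((Real.sqrt 2 : ℝ) : ℂ)^2 = 2 := by rw [sq]; exact hsq
  have h2 : (-1:ℂ)^(n*2) = 1 := by rw [pow_mul']; norm_num
  rw [h1, h2]
  ring
end
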